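/- Fix an integer p ≥ 3, a constant C > 0, β > 0 and h ∈ ℝ, and define ξ₀(r) = r²/2 + (C r)^p/p and F_RS(q,β,h) = E[log cosh(β·√(ξ₀'(q))·Z + h)] + (β²/2)·(ξ₀(1) − ξ₀(q) − (1−q)·ξ₀'(q)) for q ∈ [0,1], where Z is a standard Gaussian random variable. Then every global minimizer q* of F_RS(·,β,h) on [0,1] satisfies the self-consistency equation E[tanh²(β·√(ξ₀'(q*))·Z + h)] = q*; that is, every minimizer of the RS functional belongs to the set Q*(β,h). -/

import Mathlib

open Real MeasureTheory ProbabilityTheory Filter Set Topology Metric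
open scoped ENNReal NNReal

noncomputable def phi (x : ℝ) : ℝ := (Real.sqrt (2 * π))⁻¹ * Real.exp (-x ^ 2 / 2)

lemma phi_pos (x : ℝ) : 0 < phi x := by
  unfold phi
  positivity

lemma phi_eq (x : ℝ) : gaussianPDFReal 0 1 x = phi x := by
  unfold gaussianPDFReal phi
  norm_num

lemma integral_gauss_eq (g : ℝ → ℝ) :
    ∫ x, g x ∂(gaussianReal 0 1) = ∫ x, phi x * g x := by
  rw [gaussianReal_of_var_ne_zero 0 one_ne_zero]
  have : gaussianPDF 0 1 = fun x => ((Real.toNNReal (gaussianPDFReal 0 1 x) : ℝ≥0) : ℝ≥0∞) := by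
    ext x; rfl
  rw [this, integral_withDensity_eq_integral_smul
    (by exact (measurable_gaussianPDFReal 0 1).real_toNNReal) g]
  congr 1
  ext x
  rw [NNReal.smul_def, smul_eq_mul, Real.coe_toNNReal _ (gaussianPDFReal_nonneg 0 1 x), phi_eq]

lemma integral_phi : ∫ x, phi x = 1 := by
  have := integral_gaussianPDFReal_eq_one 0 one_ne_zero
  simp only [phi_eq] at this
  exact this

lemma hasDerivAt_phi (x : ℝ) : HasDerivAt phi (-x * phi x) x := by
  have h1 : HasDerivAt (fun x : ℝ => -x ^ 2 / 2) (-x) x := by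
    have := (hasDerivAt_pow 2 x).neg.div_const 2
    refine this.congr_deriv ?_
    ring
  have := (h1.exp).const_mul (Real.sqrt (2 * π))⁻¹
  refine this.congr_deriv ?_
  unfold phi
  ring

lemma integrable_phi : Integrable phi := by
  unfold phi
  refine Integrable.const_mul ?_ _
  have := integrable_exp_neg_mul_sq (b := (1:ℝ)/2) (by norm_num)
  convert this using 2 with x
  ring_nf

lemma integrable_id_mul_phi : Integrable (fun x => x * phi x) := by
  have := (integrable_mul_exp_neg_mul_sq (b := (1:ℝ)/2) (by norm_num)).const_mul
      (Real.sqrt (2 * π))⁻¹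
  convert this using 2 with x
  unfold phi
  ring_nf

lemma integrable_abs_mul_phi : Integrable (fun x => |x| * phi x) := by
  have := integrable_id_mul_phi.abs
  convert this using 2 with x
  rw [abs_mul, abs_of_nonneg (phi_pos x).le]

lemma one_sub_tanh_sq (y : ℝ) : 1 - Real.tanh y ^ 2 = (Real.cosh y)⁻¹ ^ 2 := by
  have hc := Real.cosh_pos y
  rw [Real.tanh_eq_sinh_div_cosh]
  rw [div_pow]
  rw [inv_pow]
  have h2 : Real.cosh y ^ 2 ≠ 0 := by positivity
  field_simp
  linarith [Real.cosh_sq_sub_sinh_sq y]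

lemma tanh_sq_lt_one (y : ℝ) : Real.tanh y ^ 2 < 1 := by
  have h := one_sub_tanh_sq y
  nlinarith [sq_nonneg (Real.cosh y)⁻¹, inv_pos.mpr (Real.cosh_pos y)]

lemma abs_tanh_le_one (y : ℝ) : |Real.tanh y| ≤ 1 := by
  have := _root_.tanh_sq_lt_one y
  nlinarith [sq_abs (Real.tanh y), abs_nonneg (Real.tanh y)]

lemma hasDerivAt_tanh (y : ℝ) : HasDerivAt Real.tanh (1 - Real.tanh y ^ 2) y := by
  have hc := (Real.cosh_pos y).ne'
  have := (Real.hasDerivAt_sinh y).div (Real.hasDerivAt_cosh y) hc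
  have heq : ∀ z, Real.tanh z = Real.sinh z / Real.cosh z := Real.tanh_eq_sinh_div_cosh
  rw [show (Real.sinh / Real.cosh) = Real.tanh from (funext fun z => (heq z).symm)]
    at this
  refine this.congr_deriv ?_
  rw [one_sub_tanh_sq]
  have hc2 : Real.cosh y ≠ 0 := (Real.cosh_pos y).ne'
  field_simp
  nlinarith [Real.cosh_sq_sub_sinh_sq y]

lemma hasDerivAt_logcosh (y : ℝ) : HasDerivAt (fun z => Real.log (Real.cosh z)) (Real.tanh y) y := by
  have := (Real.hasDerivAt_cosh y).log (Real.cosh_pos y).ne'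
  rwa [← Real.tanh_eq_sinh_div_cosh] at this

lemma logcosh_nonneg (y : ℝ) : 0 ≤ Real.log (Real.cosh y) :=
  Real.log_nonneg (Real.one_le_cosh y)

lemma logcosh_le_abs (y : ℝ) : Real.log (Real.cosh y) ≤ |y| := by
  have h1 : Real.cosh y ≤ Real.exp |y| := by
    rw [Real.cosh_eq]
    have h2 : Real.exp y ≤ Real.exp |y| := Real.exp_le_exp.2 (le_abs_self y)
    have h3 : Real.exp (-y) ≤ Real.exp |y| := Real.exp_le_exp.2 (neg_le_abs y)
    linarith
  calc Real.log (Real.cosh y) ≤ Real.log (Real.exp |y|) :=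
        Real.log_le_log (Real.cosh_pos y) h1
    _ = |y| := Real.log_exp _




lemma tanh_sq_nonneg (y : ℝ) : 0 ≤ Real.tanh y ^ 2 := sq_nonneg _

lemma phi_tendsto_atTop : Tendsto phi atTop (𝓝 0) := by
  have h1 : Tendsto (fun x : ℝ => -x ^ 2 / 2) atTop atBot := by
    apply Tendsto.atBot_div_const (by norm_num)
    exact tendsto_neg_atBot_iff.mpr (tendsto_pow_atTop two_ne_zero)
  have h2 := ((Real.tendsto_exp_atBot).comp h1).const_mul (Real.sqrt (2 * π))⁻¹
  rw [mul_zero] at h2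
  exact h2.congr (fun x => rfl)

lemma phi_neg (x : ℝ) : phi (-x) = phi x := by unfold phi; norm_num

lemma phi_tendsto_atBot : Tendsto phi atBot (𝓝 0) := by
  have := phi_tendsto_atTop.comp tendsto_neg_atBot_atTop
  exact this.congr (fun x => phi_neg x)

lemma continuous_tanh : Continuous Real.tanh :=
  continuous_iff_continuousAt.2 fun y => (hasDerivAt_tanh y).continuousAt

lemma continuous_phi : Continuous phi :=
  continuous_iff_continuousAt.2 fun y => (hasDerivAt_phi y).continuousAt

lemma integrable_tanh_mul (a h : ℝ) (g : ℝ → ℝ) (hg : Integrable g)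
    (f : ℝ → ℝ) (hf : Continuous f) (M : ℝ) (hM : ∀ y, |f y| ≤ M) :
    Integrable (fun x => f (a * x + h) * g x) :=
  hg.bdd_mul (hf.comp (by continuity)).aestronglyMeasurable (Filter.Eventually.of_forall fun x => (Real.norm_eq_abs _).trans_le (hM _))

lemma stein (a h : ℝ) :
    ∫ x, x * phi x * Real.tanh (a * x + h)
      = a * ∫ x, phi x * (1 - Real.tanh (a * x + h) ^ 2) := by
  set t : ℝ → ℝ := fun x => Real.tanh (a * x + h) with ht
  set u : ℝ → ℝ := fun x => -(phi x * t x) with hu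
  set w : ℝ → ℝ := fun x => x * phi x * t x - a * (phi x * (1 - t x ^ 2)) with hw
  have hderiv : ∀ x, HasDerivAt u (w x) x := by
    intro x
    have hlin : HasDerivAt (fun x : ℝ => a * x + h) a x := by
      simpa using ((hasDerivAt_id x).const_mul a).add_const h
    have htanh : HasDerivAt t ((1 - t x ^ 2) * a) x :=
      by have := (_root_.hasDerivAt_tanh (a * x + h)).comp x hlin; exact this
    have := ((hasDerivAt_phi x).mul htanh).neg
    refine this.congr_deriv ?_
    simp only [hw, ht]
    ring
  have hw1 : Integrable (fun x => x * phi x * t x) := by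
    have := integrable_tanh_mul a h (fun x => x * phi x) integrable_id_mul_phi
      Real.tanh continuous_tanh 1 abs_tanh_le_one
    convert this using 2 with x
    ring
  have hw2 : Integrable (fun x => phi x * (1 - t x ^ 2)) := by
    have := integrable_tanh_mul a h phi integrable_phi
      (fun y => 1 - Real.tanh y ^ 2) (continuous_const.sub (continuous_tanh.pow 2)) 1
      (fun y => by
        show |1 - Real.tanh y ^ 2| ≤ 1
        rw [abs_of_nonneg (by nlinarith [_root_.tanh_sq_lt_one y])]
        nlinarith [tanh_sq_nonneg y])
    convert this using 2 with x
    ring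
  have hwint : Integrable w := hw1.sub (hw2.const_mul a)
  have htends : ∀ x, ‖u x‖ ≤ phi x := by
    intro x
    rw [hu]
    simp only [norm_neg, norm_mul, Real.norm_eq_abs, abs_of_nonneg (phi_pos x).le]
    calc phi x * |t x| ≤ phi x * 1 := by
          exact mul_le_mul_of_nonneg_left (abs_tanh_le_one _) (phi_pos x).le
      _ = phi x := mul_one _
  have htop : Tendsto u atTop (𝓝 0) := squeeze_zero_norm htends phi_tendsto_atTop
  have hbot : Tendsto u atBot (𝓝 0) := squeeze_zero_norm htends phi_tendsto_atBot
  have hIoi : ∫ x in Ioi (0:ℝ), w x = 0 - u 0 :=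
    integral_Ioi_of_hasDerivAt_of_tendsto
      (hderiv 0).continuousAt.continuousWithinAt
      (fun x _ => hderiv x) hwint.integrableOn htop
  have hIic : ∫ x in Iic (0:ℝ), w x = u 0 - 0 :=
    integral_Iic_of_hasDerivAt_of_tendsto
      (hderiv 0).continuousAt.continuousWithinAt
      (fun x _ => hderiv x) hwint.integrableOn hbot
  have htot : ∫ x, w x = 0 := by
    rw [← intervalIntegral.integral_Iic_add_Ioi hwint.integrableOn hwint.integrableOn, hIoi, hIic]
    ring
  have hsplit : ∫ x, w x
      = (∫ x, x * phi x * t x) - a * ∫ x, phi x * (1 - t x ^ 2) := by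
    rw [hw]
    rw [integral_sub hw1 (hw2.const_mul a), integral_const_mul]
  rw [hsplit] at htot
  linarith




lemma continuous_logcosh : Continuous (fun y => Real.log (Real.cosh y)) :=
  continuous_iff_continuousAt.2 fun y => (hasDerivAt_logcosh y).continuousAt

lemma integrable_logcosh (a h : ℝ) :
    Integrable (fun x => phi x * Real.log (Real.cosh (a * x + h))) := by
  refine Integrable.mono' (g := fun x => |a| * (|x| * phi x) + |h| * phi x)
    (((integrable_id_mul_phi.abs.congr ?_).const_mul |a|).add (integrable_phi.const_mul |h|))
    (continuous_phi.mul (continuous_logcosh.comp (by continuity))).aestronglyMeasurable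
    (Filter.Eventually.of_forall fun x => ?_)
  · filter_upwards with x
    rw [abs_mul, abs_of_nonneg (phi_pos x).le]
  · have h1 : 0 ≤ Real.log (Real.cosh (a * x + h)) := logcosh_nonneg _
    have h2 : Real.log (Real.cosh (a * x + h)) ≤ |a * x + h| := logcosh_le_abs _
    have h3 : |a * x + h| ≤ |a| * |x| + |h| := by
      calc |a * x + h| ≤ |a * x| + |h| := abs_add_le _ _
        _ = |a| * |x| + |h| := by rw [abs_mul]
    have hp := (phi_pos x).le
    rw [Real.norm_eq_abs, abs_mul, abs_of_nonneg hp, abs_of_nonneg h1]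
    show phi x * Real.log (Real.cosh (a * x + h)) ≤ |a| * (|x| * phi x) + |h| * phi x
    nlinarith [mul_le_mul_of_nonneg_left (h2.trans h3) hp]

lemma integrable_phi_mul_bdd (a h : ℝ) (f : ℝ → ℝ) (hf : Continuous f) (M : ℝ)
    (hM : ∀ y, |f y| ≤ M) : Integrable (fun x => phi x * f (a * x + h)) := by
  have := integrable_phi.bdd_mul (hf.comp (by continuity : Continuous fun x : ℝ => a * x + h)).aestronglyMeasurable
    (Filter.Eventually.of_forall fun x => (Real.norm_eq_abs _).trans_le (hM _))
  exact this.congr (Filter.Eventually.of_forall fun x => mul_comm _ _)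

lemma hasDerivAt_g (h a : ℝ) :
    HasDerivAt (fun a => ∫ x, phi x * Real.log (Real.cosh (a * x + h)))
      (a * ∫ x, phi x * (1 - Real.tanh (a * x + h) ^ 2)) a := by
  rw [← stein a h]
  have key := hasDerivAt_integral_of_dominated_loc_of_deriv_le (μ := (volume : Measure ℝ))
    (F := fun a x => phi x * Real.log (Real.cosh (a * x + h)))
    (F' := fun a x => phi x * (x * Real.tanh (a * x + h)))
    (bound := fun x => |x| * phi x)
    (x₀ := a) (s := ball a 1) (ball_mem_nhds a one_pos)
    (Filter.Eventually.of_forall fun a' =>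
      (continuous_phi.mul (continuous_logcosh.comp (by continuity))).aestronglyMeasurable)
    (integrable_logcosh a h)
    ((continuous_phi.mul ((continuous_id.mul (continuous_tanh.comp (by continuity))))).aestronglyMeasurable)
    (Filter.Eventually.of_forall fun x a' _ => ?_)
    (integrable_id_mul_phi.abs.congr ?_)
    (Filter.Eventually.of_forall fun x a' _ => ?_)
  · have := key.2
    refine this.congr_deriv ?_
    congr 1
    ext x
    ring
  · rw [Real.norm_eq_abs, abs_mul, abs_mul, abs_of_nonneg (phi_pos x).le]
    calc phi x * (|x| * |Real.tanh (a' * x + h)|) ≤ phi x * (|x| * 1) :=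
          mul_le_mul_of_nonneg_left
            (mul_le_mul_of_nonneg_left (abs_tanh_le_one _) (abs_nonneg x)) (phi_pos x).le
      _ = |x| * phi x := by ring
  · filter_upwards with x
    rw [abs_mul, abs_of_nonneg (phi_pos x).le]
  · have hlin : HasDerivAt (fun a' : ℝ => a' * x + h) x a' := by
      simpa using ((hasDerivAt_id a').mul_const x).add_const h
    have hd := ((hasDerivAt_logcosh (a' * x + h)).comp a' hlin).const_mul (phi x)
    simp only [Function.comp] at hd
    exact hd.congr_deriv (by ring)

lemma continuous_H (h : ℝ) :
    Continuous (fun a => ∫ x, phi x * Real.tanh (a * x + h) ^ 2) := by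
  refine continuous_iff_continuousAt.2 fun a => continuousAt_of_dominated
    (Filter.Eventually.of_forall fun a' =>
      (continuous_phi.mul ((continuous_tanh.comp (by continuity)).pow 2)).aestronglyMeasurable)
    (Filter.Eventually.of_forall fun a' => Filter.Eventually.of_forall fun x => ?_)
    integrable_phi
    (Filter.Eventually.of_forall fun x => ?_)
  · rw [Real.norm_eq_abs, abs_mul, abs_of_nonneg (phi_pos x).le, abs_of_nonneg (sq_nonneg _)]
    have := (_root_.tanh_sq_lt_one (a' * x + h)).le
    nlinarith [phi_pos x, sq_nonneg (Real.tanh (a' * x + h))]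
  · exact ((continuous_const.mul
      ((continuous_tanh.comp (by continuity : Continuous fun a' : ℝ => a' * x + h)).pow 2))).continuousAt




noncomputable def sfun (C : ℝ) (p : ℕ) (q : ℝ) : ℝ := q + C ^ p * q ^ (p - 1)
noncomputable def sdfun (C : ℝ) (p : ℕ) (q : ℝ) : ℝ :=
  1 + C ^ p * (((p - 1 : ℕ) : ℝ) * q ^ (p - 1 - 1))
noncomputable def Hfun (h b : ℝ) : ℝ := ∫ x, phi x * Real.tanh (b * x + h) ^ 2
noncomputable def Gfun (p : ℕ) (C β h : ℝ) (q : ℝ) : ℝ :=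
  (∫ x, phi x * Real.log (Real.cosh (β * Real.sqrt (sfun C p q) * x + h)))
    + β ^ 2 / 2 * (((1:ℝ) ^ 2 / 2 + (C * 1) ^ p / p) - (q ^ 2 / 2 + (C * q) ^ p / p)
        - (1 - q) * sfun C p q)

section main
variable {p : ℕ} {C β : ℝ} (h : ℝ)

lemma integrable_tanhsq (b : ℝ) : Integrable (fun x => phi x * Real.tanh (b * x + h) ^ 2) :=
  integrable_phi_mul_bdd b h (fun y => Real.tanh y ^ 2) (continuous_tanh.pow 2) 1
    (fun y => by rw [abs_of_nonneg (sq_nonneg _)]; exact (_root_.tanh_sq_lt_one y).le)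

lemma one_sub_Hfun (b : ℝ) :
    ∫ x, phi x * (1 - Real.tanh (b * x + h) ^ 2) = 1 - Hfun h b := by
  have heq : (fun x => phi x * (1 - Real.tanh (b * x + h) ^ 2))
      = fun x => phi x - phi x * Real.tanh (b * x + h) ^ 2 := by
    funext x; ring
  rw [Hfun, heq, integral_sub integrable_phi (integrable_tanhsq h b), integral_phi]

lemma Hfun_nonneg (b : ℝ) : 0 ≤ Hfun h b :=
  integral_nonneg fun x => mul_nonneg (phi_pos x).le (sq_nonneg _)

lemma Hfun_lt_one (b : ℝ) : Hfun h b < 1 := by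
  have hpos : 0 < ∫ x, phi x * (1 - Real.tanh (b * x + h) ^ 2) := by
    have hint : Integrable (fun x => phi x * (1 - Real.tanh (b * x + h) ^ 2)) := by
      have heq : (fun x => phi x * (1 - Real.tanh (b * x + h) ^ 2))
          = fun x => phi x - phi x * Real.tanh (b * x + h) ^ 2 := by funext x; ring
      rw [heq]; exact integrable_phi.sub (integrable_tanhsq h b)
    have hnn : 0 ≤ fun x => phi x * (1 - Real.tanh (b * x + h) ^ 2) := by
      intro x
      exact mul_nonneg (phi_pos x).le (by nlinarith [_root_.tanh_sq_lt_one (b * x + h)])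
    rw [integral_pos_iff_support_of_nonneg hnn hint]
    have hsupp : Function.support (fun x => phi x * (1 - Real.tanh (b * x + h) ^ 2)) = univ := by
      ext x
      simp only [Function.mem_support, mem_univ, iff_true]
      have ht := _root_.tanh_sq_lt_one (b * x + h)
      exact (mul_pos (phi_pos x) (by nlinarith)).ne'
    rw [hsupp]
    simp
  rw [one_sub_Hfun] at hpos
  linarith

lemma sfun_pos (hC : 0 < C) {q : ℝ} (hq : 0 < q) : 0 < sfun C p q := by
  unfold sfun; positivity

lemma sdfun_pos (hC : 0 < C) {q : ℝ} (hq : 0 ≤ q) : 0 < sdfun C p q := by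
  unfold sdfun
  have h1 : (0:ℝ) ≤ C ^ p * (((p - 1 : ℕ) : ℝ) * q ^ (p - 1 - 1)) := by positivity
  linarith

lemma hasDerivAt_sfun (q : ℝ) : HasDerivAt (sfun C p) (sdfun C p q) q := by
  have := (hasDerivAt_id q).add (((hasDerivAt_pow (p - 1) q)).const_mul (C ^ p))
  exact this.congr_deriv (by unfold sdfun; ring)

lemma hasDerivAt_xi (hp : 3 ≤ p) (hC : 0 < C) (r : ℝ) :
    HasDerivAt (fun r => r ^ 2 / 2 + (C * r) ^ p / p) (sfun C p r) r := by
  have hp0 : (p : ℝ) ≠ 0 := Nat.cast_ne_zero.mpr (by omega)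
  have h1 : HasDerivAt (fun r : ℝ => r ^ 2 / 2) r r := by
    have := (hasDerivAt_pow 2 r).div_const 2
    exact this.congr_deriv (by push_cast; ring)
  have hin : HasDerivAt (fun r : ℝ => C * r) C r := by
    simpa using (hasDerivAt_id r).const_mul C
  have h2 : HasDerivAt (fun r : ℝ => (C * r) ^ p / p) (C ^ p * r ^ (p - 1)) r := by
    have := ((hasDerivAt_pow p (C * r)).comp r hin).div_const p
    refine this.congr_deriv ?_
    have hC' : C ^ (p - 1) * C = C ^ p := by
      rw [← pow_succ]; congr 1; omega
    rw [mul_pow]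
    field_simp
    rw [← hC']
    ring
  exact (h1.add h2).congr_deriv (by unfold sfun; ring)

lemma continuous_sfun : Continuous (sfun C p) := by
  unfold sfun; continuity

lemma continuous_Hfun_comp :
    Continuous (fun q => Hfun h (β * Real.sqrt (sfun C p q))) := by
  have hH : Continuous (fun b => Hfun h b) := by
    unfold Hfun
    refine continuous_iff_continuousAt.2 fun a => continuousAt_of_dominated
      (Filter.Eventually.of_forall fun a' =>
        (continuous_phi.mul ((continuous_tanh.comp (by continuity)).pow 2)).aestronglyMeasurable)
      (Filter.Eventually.of_forall fun a' => Filter.Eventually.of_forall fun x => ?_)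
      integrable_phi
      (Filter.Eventually.of_forall fun x => ?_)
    · rw [Real.norm_eq_abs, abs_mul, abs_of_nonneg (phi_pos x).le, abs_of_nonneg (sq_nonneg _)]
      have := (_root_.tanh_sq_lt_one (a' * x + h)).le
      nlinarith [phi_pos x, sq_nonneg (Real.tanh (a' * x + h))]
    · exact ((continuous_const.mul
        ((continuous_tanh.comp (by continuity : Continuous fun a' : ℝ => a' * x + h)).pow 2))).continuousAt
  exact hH.comp (continuous_const.mul (Real.continuous_sqrt.comp continuous_sfun))

lemma continuous_Gfun : Continuous (Gfun p C β h) := by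
  unfold Gfun
  have hg : Continuous (fun b => ∫ x, phi x * Real.log (Real.cosh (b * x + h))) :=
    continuous_iff_continuousAt.2 fun b => (hasDerivAt_g h b).continuousAt
  exact (hg.comp (continuous_const.mul (Real.continuous_sqrt.comp continuous_sfun))).add
    (continuous_const.mul (((continuous_const.sub (by continuity)).sub
      ((continuous_const.sub continuous_id).mul continuous_sfun))))

lemma hasDerivAt_Gfun (hp : 3 ≤ p) (hC : 0 < C) (hβ : 0 < β) {q : ℝ} (hq : 0 < q) :
    HasDerivAt (Gfun p C β h)
      (β ^ 2 * sdfun C p q / 2 * (q - Hfun h (β * Real.sqrt (sfun C p q)))) q := by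
  have hs := sfun_pos (p := p) hC hq
  have hsqrt : 0 < Real.sqrt (sfun C p q) := Real.sqrt_pos.2 hs
  set b := β * Real.sqrt (sfun C p q) with hb
  have ha : HasDerivAt (fun q => β * Real.sqrt (sfun C p q))
      (β * (1 / (2 * Real.sqrt (sfun C p q)) * sdfun C p q)) q :=
    ((Real.hasDerivAt_sqrt hs.ne').comp q (hasDerivAt_sfun q)).const_mul β
  have hgb := hasDerivAt_g h b
  have hchain := hgb.comp q ha
  rw [one_sub_Hfun] at hchain
  have hP : HasDerivAt (fun q : ℝ => β ^ 2 / 2 * (((1:ℝ) ^ 2 / 2 + (C * 1) ^ p / p)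
        - (q ^ 2 / 2 + (C * q) ^ p / p) - (1 - q) * sfun C p q))
      (β ^ 2 / 2 * (-(1 - q) * sdfun C p q)) q := by
    have h1 : HasDerivAt (fun q : ℝ => ((1:ℝ) ^ 2 / 2 + (C * 1) ^ p / p)
        - (q ^ 2 / 2 + (C * q) ^ p / p)) (-(sfun C p q)) q :=
      (hasDerivAt_xi hp hC q).const_sub _
    have h2 : HasDerivAt (fun q : ℝ => (1 - q) * sfun C p q)
        ((-1) * sfun C p q + (1 - q) * sdfun C p q) q := by
      have hl : HasDerivAt (fun q : ℝ => 1 - q) (-1) q := by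
        simpa using (hasDerivAt_id q).const_sub 1
      exact (hl.mul (hasDerivAt_sfun q)).congr_deriv (by ring)
    exact ((h1.sub h2).const_mul (β ^ 2 / 2)).congr_deriv (by ring)
  have htotal := hchain.add hP
  refine (htotal.congr_deriv ?_)
  rw [hb]
  have hne : Real.sqrt (sfun C p q) ≠ 0 := hsqrt.ne'
  field_simp
  ring

end main

/-- For `p ≥ 3`, `C > 0`, `β > 0`, `h ∈ ℝ`, `ξ₀ r = r²/2 + (C r)^p/p` and the RS functional
`F_RS(q) = E[log cosh(β √(ξ₀'(q)) Z + h)] + (β²/2)(ξ₀(1) - ξ₀(q) - (1-q) ξ₀'(q))`,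
every global minimizer `q*` of `F_RS` on `[0,1]` satisfies the self-consistency equation
`E[tanh²(β √(ξ₀'(q*)) Z + h)] = q*`, i.e. belongs to `Q*(β,h)`. -/
theorem stmt_10 (p : ℕ) (hp : 3 ≤ p) (C β h : ℝ) (hC : 0 < C) (hβ : 0 < β) :
    let ξ₀ : ℝ → ℝ := fun r => r ^ 2 / 2 + (C * r) ^ p / p
    let F : ℝ → ℝ := fun q =>
      (∫ x, Real.log (Real.cosh (β * Real.sqrt (deriv ξ₀ q) * x + h)) ∂(gaussianReal 0 1))
        + β ^ 2 / 2 * (ξ₀ 1 - ξ₀ q - (1 - q) * deriv ξ₀ q)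
    ∀ q' ∈ Set.Icc (0 : ℝ) 1, (∀ q ∈ Set.Icc (0 : ℝ) 1, F q' ≤ F q) →
      ∫ x, Real.tanh (β * Real.sqrt (deriv ξ₀ q') * x + h) ^ 2 ∂(gaussianReal 0 1) = q' := by
  intro ξ₀ F q' hq' hmin
  have hd : ∀ r, deriv ξ₀ r = sfun C p r := fun r => (hasDerivAt_xi hp hC r).deriv
  have hFeq : ∀ q, F q = Gfun p C β h q := by
    intro q
    show (∫ x, Real.log (Real.cosh (β * Real.sqrt (deriv ξ₀ q) * x + h)) ∂(gaussianReal 0 1))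
        + β ^ 2 / 2 * (ξ₀ 1 - ξ₀ q - (1 - q) * deriv ξ₀ q) = _
    rw [hd, integral_gauss_eq]
    rfl
  have hminG : ∀ q ∈ Set.Icc (0:ℝ) 1, Gfun p C β h q' ≤ Gfun p C β h q := by
    intro q hq
    have := hmin q hq
    rwa [hFeq, hFeq] at this
  rw [hd, integral_gauss_eq]
  show Hfun h (β * Real.sqrt (sfun C p q')) = q'
  set k : ℝ → ℝ := fun q => q - Hfun h (β * Real.sqrt (sfun C p q)) with hkdef
  have hkcont : Continuous k := continuous_id.sub (continuous_Hfun_comp h)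
  suffices hk0 : k q' = 0 by
    have : q' - Hfun h (β * Real.sqrt (sfun C p q')) = 0 := hk0
    linarith
  obtain ⟨h0, h1⟩ := hq'
  rcases eq_or_lt_of_le h0 with hq0 | hq0
  · -- q' = 0
    subst hq0
    have hs0 : sfun C p 0 = 0 := by
      unfold sfun
      rw [zero_pow (by omega : p - 1 ≠ 0)]
      ring
    have hH0 : Hfun h (β * Real.sqrt (sfun C p 0)) = Real.tanh h ^ 2 := by
      rw [hs0, Real.sqrt_zero, mul_zero]
      unfold Hfun
      simp only [zero_mul, zero_add]
      rw [integral_mul_const, integral_phi, one_mul]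
    have hkval : k 0 = -(Real.tanh h ^ 2) := by
      show (0:ℝ) - Hfun h (β * Real.sqrt (sfun C p 0)) = _
      rw [hH0]; ring
    by_contra hne
    have ht : 0 < Real.tanh h ^ 2 := by
      rcases (sq_nonneg (Real.tanh h)).lt_or_eq with hlt | heq
      · exact hlt
      · exfalso; apply hne; rw [hkval, ← heq]; ring
    have hk0neg : k 0 < 0 := by rw [hkval]; linarith
    obtain ⟨δ, hδpos, hδ⟩ := Metric.isOpen_iff.mp (isOpen_Iio.preimage hkcont) 0
      (by simpa [Set.mem_preimage] using hk0neg)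
    set r := min (δ/2) 1 with hrdef
    have hrpos : 0 < r := lt_min (by linarith) one_pos
    have hr1 : r ≤ 1 := min_le_right _ _
    have hkneg : ∀ x ∈ Set.Ioo (0:ℝ) r, k x < 0 := by
      intro x hx
      have hmem : x ∈ ball (0:ℝ) δ := by
        rw [mem_ball, Real.dist_eq, sub_zero, abs_of_pos hx.1]
        calc x < r := hx.2
          _ ≤ δ/2 := min_le_left _ _
          _ < δ := by linarith
      exact hδ hmem
    obtain ⟨c, hc, hceq⟩ := exists_hasDerivAt_eq_slope (Gfun p C β h)
      (fun q => β ^ 2 * sdfun C p q / 2 * k q) hrpos ((continuous_Gfun h).continuousOn)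
      (fun x hx => hasDerivAt_Gfun h hp hC hβ hx.1)
    have hsd := sdfun_pos (p := p) hC hc.1.le
    have hneg : β ^ 2 * sdfun C p c / 2 * k c < 0 :=
      mul_neg_of_pos_of_neg (div_pos (mul_pos (pow_pos hβ 2) hsd) two_pos) (hkneg c hc)
    rw [hceq] at hneg
    have hGr : Gfun p C β h r - Gfun p C β h 0 < 0 := by
      by_contra hge
      push_neg at hge
      exact absurd hneg (not_lt.2 (div_nonneg hge (by linarith)))
    exact absurd (hminG r ⟨hrpos.le, hr1⟩) (by linarith)
  · rcases eq_or_lt_of_le h1 with hq1 | hq1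
    · -- q' = 1
      exfalso
      subst hq1
      have hk1 : 0 < k 1 := by
        have := Hfun_lt_one h (β * Real.sqrt (sfun C p 1))
        show 0 < (1:ℝ) - Hfun h (β * Real.sqrt (sfun C p 1))
        linarith
      obtain ⟨δ, hδpos, hδ⟩ := Metric.isOpen_iff.mp (isOpen_Ioi.preimage hkcont) 1
        (by simpa [Set.mem_preimage] using hk1)
      set l := max (1 - δ/2) (1/2) with hldef
      have hl1 : l < 1 := max_lt (by linarith) (by norm_num)
      have hl0 : (0:ℝ) ≤ l := le_trans (by norm_num) (le_max_right _ _)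
      have hlhalf : (1:ℝ)/2 ≤ l := le_max_right _ _
      have hkpos : ∀ x ∈ Set.Ioo l 1, 0 < k x := by
        intro x hx
        have hmem : x ∈ ball (1:ℝ) δ := by
          rw [mem_ball, Real.dist_eq, abs_of_nonpos (by linarith [hx.2])]
          have : 1 - δ/2 ≤ l := le_max_left _ _
          linarith [hx.1]
        exact hδ hmem
      obtain ⟨c, hc, hceq⟩ := exists_hasDerivAt_eq_slope (Gfun p C β h)
        (fun q => β ^ 2 * sdfun C p q / 2 * k q) hl1 ((continuous_Gfun h).continuousOn)
        (fun x hx => hasDerivAt_Gfun h hp hC hβ (by linarith [hx.1] : (0:ℝ) < x))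
      have hsd := sdfun_pos (p := p) hC (by linarith [hc.1] : (0:ℝ) ≤ c)
      have hpos : 0 < β ^ 2 * sdfun C p c / 2 * k c :=
        mul_pos (div_pos (mul_pos (pow_pos hβ 2) hsd) two_pos) (hkpos c hc)
      rw [hceq] at hpos
      have hGl : 0 < Gfun p C β h 1 - Gfun p C β h l := by
        by_contra hge
        push_neg at hge
        have : (Gfun p C β h 1 - Gfun p C β h l) / (1 - l) ≤ 0 :=
          div_nonpos_iff.2 (Or.inr ⟨by linarith, by linarith⟩)
        linarith
      exact absurd (hminG l ⟨hl0, hl1.le⟩) (by linarith)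
    · -- interior
      have hmem : Set.Icc (0:ℝ) 1 ∈ 𝓝 q' := Icc_mem_nhds hq0 hq1
      have hloc : IsLocalMin (Gfun p C β h) q' :=
        Filter.eventually_of_mem hmem (fun y hy => hminG y hy)
      have hz := hloc.hasDerivAt_eq_zero (hasDerivAt_Gfun h hp hC hβ hq0)
      have hsd := sdfun_pos (p := p) hC hq0.le
      have hfac : (β ^ 2 * sdfun C p q' / 2) ≠ 0 :=
        (div_pos (mul_pos (pow_pos hβ 2) hsd) two_pos).ne'
      rcases mul_eq_zero.mp hz with hbad | hgood
      · exact absurd hbad hfac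
      · exact hgood
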